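/- Let A, B, C be subsets of a finite set V with A ∩ B ∩ C = {v} a single point, (A∩B)\C = ∅, A\(B∪C) ≠ ∅, B\(A∪C) ≠ ∅, and C\(A∪B) ≠ ∅. Then the clutter {A, B, C} is not an interval hypergraph, but for every x ∈ V, the family obtained by contracting x (i.e., {A\{x}, B\{x}, C\{x}} restricted to edges containing x) is an interval hypergraph on V\{x}. -/
import Mathlib


/-- A family of subsets of a finite vertex type is an interval hypergraph if some
ordering of the vertices maps every edge to an interval. -/
def IsIntervalHypergraph (V : Type*) [Fintype V] (E : Set (Set V)) : Prop :=
  ∃ f : V ≃ Fin (Fintype.card V),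
    ∀ H ∈ E, ∃ i j : Fin (Fintype.card V), ⇑f '' H = Set.Icc i j

lemma exists_mono_equiv {W : Type*} [Fintype W] (g : W → ℕ) :
    ∃ f : W ≃ Fin (Fintype.card W), ∀ w w', f w ≤ f w' → g w ≤ g w' := by
  classical
  rcases isEmpty_or_nonempty W with h | h
  · exact ⟨Fintype.equivFin W, fun w => isEmptyElim w⟩
  set n := Fintype.card W with hn
  have hn0 : 0 < n := Fintype.card_pos
  set e := Fintype.equivFin W with he
  set j : W → ℕ := fun w => g w * n + (e w : ℕ) with hj
  have key : ∀ w w', g w < g w' → j w < j w' := by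
    intro w w' h
    have h1 : (e w : ℕ) < n := (e w).isLt
    have h2 : g w * n + (e w : ℕ) < g w * n + n := Nat.add_lt_add_left h1 _
    have h3 : g w * n + n = (g w + 1) * n := (Nat.succ_mul _ _).symm
    have h4 : (g w + 1) * n ≤ g w' * n := Nat.mul_le_mul_right n h
    calc j w = g w * n + (e w : ℕ) := rfl
      _ < g w * n + n := h2
      _ = (g w + 1) * n := h3
      _ ≤ g w' * n := h4
      _ ≤ j w' := Nat.le_add_right _ _
  have hjinj : Function.Injective j := by
    intro w w' hww
    have hg : g w = g w' := by
      by_contra hne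
      rcases Nat.lt_or_ge (g w) (g w') with hlt | hge
      · exact absurd hww (Nat.ne_of_lt (key _ _ hlt))
      · have : g w' < g w := lt_of_le_of_ne hge (fun h => hne h.symm)
        exact absurd hww.symm (Nat.ne_of_lt (key _ _ this))
    have : (e w : ℕ) = (e w' : ℕ) := by
      have := hww
      simp only [hj, hg] at this
      omega
    exact e.injective (Fin.val_injective this)
  set s : Finset ℕ := Finset.image j Finset.univ with hs
  have hcard : s.card = n := by
    rw [hs, Finset.card_image_of_injective _ hjinj, Finset.card_univ]
  have hmem : ∀ w, j w ∈ s := fun w => Finset.mem_image_of_mem j (Finset.mem_univ w)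
  set o := s.orderIsoOfFin hcard with ho
  set F : W → Fin n := fun w => o.symm ⟨j w, hmem w⟩ with hF
  have hFinj : Function.Injective F := by
    intro w w' hww
    have : (⟨j w, hmem w⟩ : {x // x ∈ s}) = ⟨j w', hmem w'⟩ := o.symm.injective hww
    exact hjinj (congrArg Subtype.val this)
  have hFbij : Function.Bijective F :=
    (Fintype.bijective_iff_injective_and_card F).mpr ⟨hFinj, by simp [hn]⟩
  refine ⟨Equiv.ofBijective F hFbij, ?_⟩
  intro w w' hle
  by_contra hgt
  push_neg at hgt
  have hjlt : j w' < j w := key _ _ hgt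
  have : o (F w') < o (F w) := by
    simp only [hF, OrderIso.apply_symm_apply]
    exact Subtype.mk_lt_mk.mpr hjlt
  have : F w' < F w := o.lt_iff_lt.mp this
  exact absurd hle (not_le.mpr this)

lemma image_convex_eq_Icc {W : Type*} [Fintype W] {n : ℕ} (f : W ≃ Fin n)
    (X : Set W) (hne : X.Nonempty)
    (hconv : ∀ w1 w2 w3 : W, f w1 ≤ f w2 → f w2 ≤ f w3 → w1 ∈ X → w3 ∈ X → w2 ∈ X) :
    ∃ i j : Fin n, ⇑f '' X = Set.Icc i j := by
  classical
  obtain ⟨w0, hw0⟩ := hne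
  set T : Finset (Fin n) := Finset.univ.filter (fun m => f.symm m ∈ X) with hT
  have hTne : T.Nonempty := ⟨f w0, by simp [hT, hw0]⟩
  refine ⟨T.min' hTne, T.max' hTne, ?_⟩
  ext m
  constructor
  · rintro ⟨w, hw, rfl⟩
    have hmT : f w ∈ T := by simp [hT, hw]
    exact ⟨T.min'_le _ hmT, T.le_max' _ hmT⟩
  · rintro ⟨h1, h2⟩
    have hiT := T.min'_mem hTne
    have hjT := T.max'_mem hTne
    simp only [hT, Finset.mem_filter, Finset.mem_univ, true_and] at hiT hjT
    have hw : f.symm m ∈ X := by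
      refine hconv (f.symm (T.min' hTne)) (f.symm m) (f.symm (T.max' hTne)) ?_ ?_ hiT hjT
      · simpa using h1
      · simpa using h2
    exact ⟨f.symm m, hw, by simp⟩

lemma interval_of_three {W : Type*} [Fintype W] (X Y Z : Set W) (hXY : X ∩ Y = ∅)
    (E : Set (Set W)) (hE : ∀ H ∈ E, H = X ∨ H = Y ∨ H = Z)
    (hne : ∀ H ∈ E, H.Nonempty) : IsIntervalHypergraph W E := by
  classical
  set g : W → ℕ := fun w =>
    if w ∈ X then (if w ∈ Z then 2 else 1)
    else if w ∈ Y then (if w ∈ Z then 4 else 5)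
    else if w ∈ Z then 3 else 6 with hg
  have hXY' : ∀ w, w ∈ X → w ∉ Y := fun w hx hy => by
    have : w ∈ X ∩ Y := ⟨hx, hy⟩
    rw [hXY] at this
    exact this
  have hXeq : X = g ⁻¹' Set.Icc 1 2 := by
    ext w
    simp only [Set.mem_preimage, Set.mem_Icc, hg]
    by_cases hx : w ∈ X <;> by_cases hy : w ∈ Y <;> by_cases hz : w ∈ Z <;>
      simp [hx, hy, hz]
  have hYeq : Y = g ⁻¹' Set.Icc 4 5 := by
    ext w
    simp only [Set.mem_preimage, Set.mem_Icc, hg]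
    by_cases hx : w ∈ X
    · have hy := hXY' w hx
      by_cases hz : w ∈ Z <;> simp [hx, hy, hz]
    · by_cases hy : w ∈ Y <;> by_cases hz : w ∈ Z <;> simp [hx, hy, hz]
  have hZeq : Z = g ⁻¹' Set.Icc 2 4 := by
    ext w
    simp only [Set.mem_preimage, Set.mem_Icc, hg]
    by_cases hx : w ∈ X <;> by_cases hy : w ∈ Y <;> by_cases hz : w ∈ Z <;>
      simp [hx, hy, hz]
  obtain ⟨f, hf⟩ := exists_mono_equiv g
  refine ⟨f, ?_⟩
  intro H hH
  have key : ∀ a b : ℕ, H = g ⁻¹' Set.Icc a b → ∃ i j, ⇑f '' H = Set.Icc i j := by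
    intro a b hab
    apply image_convex_eq_Icc f H (hne H hH)
    intro w1 w2 w3 h12 h23 h1 h3
    have g12 := hf _ _ h12
    have g23 := hf _ _ h23
    rw [hab] at h1 h3 ⊢
    simp only [Set.mem_preimage, Set.mem_Icc] at h1 h3 ⊢
    omega
  rcases hE H hH with rfl | rfl | rfl
  · exact key 1 2 hXeq
  · exact key 4 5 hYeq
  · exact key 2 4 hZeq

/-- The configuration `Y_{a,b;d}` (three sets with a single common point `v`,
`(A∩B)\C = ∅`, and each with a private element) is not an interval hypergraph, yet
every single-vertex contraction of it is. -/
theorem stmt_14 {V : Type*} [Fintype V] [DecidableEq V] (A B C : Set V) (v : V)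
    (hABC : A ∩ B ∩ C = {v}) (hAB : (A ∩ B) \ C = ∅)
    (hA : (A \ (B ∪ C)).Nonempty) (hB : (B \ (A ∪ C)).Nonempty)
    (hC : (C \ (A ∪ B)).Nonempty) :
    ¬ IsIntervalHypergraph V ({A, B, C} : Set (Set V)) ∧
      ∀ x : V, IsIntervalHypergraph {w : V // w ≠ x}
        {H' : Set {w : V // w ≠ x} | ∃ H ∈ ({A, B, C} : Set (Set V)),
          x ∈ H ∧ H' = (Subtype.val ⁻¹' H)} := by
  classical
  obtain ⟨a, haA, haBC⟩ := hA
  obtain ⟨b, hbB, hbAC⟩ := hB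
  obtain ⟨c, hcC, hcAB⟩ := hC
  rw [Set.mem_union] at haBC hbAC hcAB
  push_neg at haBC hbAC hcAB
  obtain ⟨haB, haC⟩ := haBC
  obtain ⟨hbA, hbC⟩ := hbAC
  obtain ⟨hcA, hcB⟩ := hcAB
  have hv : v ∈ A ∩ B ∩ C := by rw [hABC]; rfl
  obtain ⟨⟨hvA, hvB⟩, hvC⟩ := hv
  have hABsub : A ∩ B ⊆ C := Set.diff_eq_empty.mp hAB
  constructor
  · rintro ⟨f, hf⟩
    obtain ⟨iA, jA, hfA⟩ := hf A (by simp)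
    obtain ⟨iB, jB, hfB⟩ := hf B (by simp)
    obtain ⟨iC, jC, hfC⟩ := hf C (by simp)
    have hmem : ∀ (S : Set V) (i j : Fin (Fintype.card V)), ⇑f '' S = Set.Icc i j →
        ∀ w, w ∈ S ↔ ((i : ℕ) ≤ (f w : ℕ) ∧ (f w : ℕ) ≤ (j : ℕ)) := by
      intro S i j h w
      rw [← f.injective.mem_set_image (a := w), h, Set.mem_Icc, Fin.le_def, Fin.le_def]
    have h1 := (hmem A iA jA hfA v).mp hvA
    have h2 := (hmem B iB jB hfB v).mp hvB
    have h3 := (hmem C iC jC hfC v).mp hvC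
    have h4 := (hmem A iA jA hfA a).mp haA
    have h5 : ¬((iB:ℕ) ≤ (f a:ℕ) ∧ (f a:ℕ) ≤ (jB:ℕ)) :=
      fun h => haB ((hmem B iB jB hfB a).mpr h)
    have h6 : ¬((iC:ℕ) ≤ (f a:ℕ) ∧ (f a:ℕ) ≤ (jC:ℕ)) :=
      fun h => haC ((hmem C iC jC hfC a).mpr h)
    have h7 := (hmem B iB jB hfB b).mp hbB
    have h8 : ¬((iA:ℕ) ≤ (f b:ℕ) ∧ (f b:ℕ) ≤ (jA:ℕ)) :=
      fun h => hbA ((hmem A iA jA hfA b).mpr h)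
    have h9 : ¬((iC:ℕ) ≤ (f b:ℕ) ∧ (f b:ℕ) ≤ (jC:ℕ)) :=
      fun h => hbC ((hmem C iC jC hfC b).mpr h)
    have h10 := (hmem C iC jC hfC c).mp hcC
    have h11 : ¬((iA:ℕ) ≤ (f c:ℕ) ∧ (f c:ℕ) ≤ (jA:ℕ)) :=
      fun h => hcA ((hmem A iA jA hfA c).mpr h)
    have h12 : ¬((iB:ℕ) ≤ (f c:ℕ) ∧ (f c:ℕ) ≤ (jB:ℕ)) :=
      fun h => hcB ((hmem B iB jB hfB c).mpr h)
    have hcv : (f c : ℕ) ≠ (f v : ℕ) := by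
      intro h
      exact hcA (by rw [show c = v from f.injective (Fin.val_injective h)]; exact hvA)
    omega
  · intro x
    have nonemp : ∀ (H : Set V) (p : V), v ∈ H → p ∈ H → p ≠ v →
        (Subtype.val ⁻¹' H : Set {w : V // w ≠ x}).Nonempty := by
      intro H p hvH hpH hpv
      by_cases h : v = x
      · exact ⟨⟨p, by rw [← h]; exact hpv⟩, hpH⟩
      · exact ⟨⟨v, h⟩, hvH⟩
    have hav : a ≠ v := fun h => haB (h ▸ hvB)
    have hbv : b ≠ v := fun h => hbA (h ▸ hvA)
    have hcv : c ≠ v := fun h => hcA (h ▸ hvA)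
    have hAne := nonemp A a hvA haA hav
    have hBne := nonemp B b hvB hbB hbv
    have hCne := nonemp C c hvC hcC hcv
    have hneE : ∀ H' ∈ {H' : Set {w : V // w ≠ x} | ∃ H ∈ ({A, B, C} : Set (Set V)),
        x ∈ H ∧ H' = (Subtype.val ⁻¹' H)}, H'.Nonempty := by
      rintro H' ⟨H, hH, _, rfl⟩
      rcases hH with rfl | rfl | rfl
      · exact hAne
      · exact hBne
      · exact hCne
    by_cases hxv : x = v
    · subst hxv
      apply interval_of_three (Subtype.val ⁻¹' A) (Subtype.val ⁻¹' B) (Subtype.val ⁻¹' C)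
      · ext ⟨w, hw⟩
        simp only [Set.mem_inter_iff, Set.mem_preimage, Set.mem_empty_iff_false, iff_false,
          not_and]
        intro hwA hwB
        have : w ∈ A ∩ B ∩ C := ⟨⟨hwA, hwB⟩, hABsub ⟨hwA, hwB⟩⟩
        rw [hABC] at this
        exact hw this
      · rintro H' ⟨H, hH, _, rfl⟩
        rcases hH with rfl | rfl | rfl
        · exact Or.inl rfl
        · exact Or.inr (Or.inl rfl)
        · exact Or.inr (Or.inr rfl)
      · exact hneE
    · have hnot : x ∉ A ∨ x ∉ B := by
        by_contra h
        push_neg at h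
        have : x ∈ A ∩ B ∩ C := ⟨⟨h.1, h.2⟩, hABsub ⟨h.1, h.2⟩⟩
        rw [hABC] at this
        exact hxv this
      rcases hnot with hxA | hxB
      · apply interval_of_three (Subtype.val ⁻¹' B) (∅ : Set {w : V // w ≠ x})
          (Subtype.val ⁻¹' C)
        · exact Set.inter_empty _
        · rintro H' ⟨H, hH, hxH, rfl⟩
          rcases hH with rfl | rfl | rfl
          · exact absurd hxH hxA
          · exact Or.inl rfl
          · exact Or.inr (Or.inr rfl)
        · exact hneE
      · apply interval_of_three (Subtype.val ⁻¹' A) (∅ : Set {w : V // w ≠ x})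
          (Subtype.val ⁻¹' C)
        · exact Set.inter_empty _
        · rintro H' ⟨H, hH, hxH, rfl⟩
          rcases hH with rfl | rfl | rfl
          · exact Or.inl rfl
          · exact absurd hxH hxB
          · exact Or.inr (Or.inr rfl)
        · exact hneE
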